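/- arXiv:quant-ph/0610195 — 2 statements merged into one kernel-verified Lean document; each statement's English description precedes it below -/
import Mathlib

section
/- With the setup of a concatenated CSS code pair: let (C1,C2) be an [[n,k]] code pair over F_q (i.e., C2^⊥ ≤ C1, k = dim C1 + dim C2 − n), with maps π_1, π_2 : F_{q^k}^N → F_q^{nN} constructed from dual generator vectors and dual trace bases as above, and let (D1,D2) be an [[N,K]] code pair over F_{q^k} (i.e., D2^⊥ ≤ D1). Then (π_1(D2^⊥) + ⊕_{i=1}^N C2^⊥)^⊥ = π_2(D2) + ⊕_{i=1}^N C1^⊥, where duals on the left and right are taken in F_q^{nN} with respect to the standard dot product. -/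
def dualCode {F : Type*} [Field F] {ι : Type*} [Fintype ι]
    (C : Submodule F (ι → F)) : Submodule F (ι → F) where
  carrier := {y | ∀ x ∈ C, dotProduct x y = 0}
  add_mem' := by
    intro a b ha hb x hx
    simp [dotProduct_add, ha x hx, hb x hx]
  zero_mem' := by intro x hx; simp
  smul_mem' := by
    intro c a ha x hx
    simp [dotProduct_smul, ha x hx]

/-- The direct sum of `N` copies of a code `C ≤ F^n` inside `F^(N×n)`. -/
def blockCode {F : Type*} [Field F] {n N : ℕ} (C : Submodule F (Fin n → F)) :
    Submodule F (Fin N × Fin n → F) where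
  carrier := {v | ∀ i : Fin N, (fun j => v (i, j)) ∈ C}
  add_mem' := by
    intro a b ha hb i
    exact C.add_mem (ha i) (hb i)
  zero_mem' := by
    intro i
    exact C.zero_mem
  smul_mem' := by
    intro c a ha i
    exact C.smul_mem c (ha i)


noncomputable def dotForm (F : Type*) [Field F] (ι : Type*) [Fintype ι] :
    LinearMap.BilinForm F (ι → F) :=
  LinearMap.mk₂ F (fun x y => dotProduct x y)
    (fun a b c => add_dotProduct a b c)
    (fun r a b => smul_dotProduct r a b)
    (fun a b c => dotProduct_add a b c)
    (fun r a b => dotProduct_smul r a b)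

theorem dotForm_nondeg {F : Type*} [Field F] {ι : Type*} [Fintype ι] [DecidableEq ι] :
    (dotForm F ι).Nondegenerate := by
  refine ⟨fun x hx => ?_, fun x hx => ?_⟩ <;> funext i
  · have := hx (Pi.single i 1)
    simpa [dotForm, dotProduct_single] using this
  · have := hx (Pi.single i 1)
    simpa [dotForm, single_dotProduct] using this

theorem dotForm_refl {F : Type*} [Field F] {ι : Type*} [Fintype ι] :
    (dotForm F ι).IsRefl := by
  intro x y h
  simp only [dotForm, LinearMap.mk₂_apply] at h ⊢
  rw [dotProduct_comm]; exact h

theorem dualCode_eq_orthogonal {F : Type*} [Field F] {ι : Type*} [Fintype ι]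
    (C : Submodule F (ι → F)) : dualCode C = (dotForm F ι).orthogonal C := by
  ext y
  simp [dualCode, LinearMap.BilinForm.orthogonal, dotForm, LinearMap.BilinForm.IsOrtho]

theorem dualCode_dualCode {F : Type*} [Field F] {ι : Type*} [Fintype ι]
    (C : Submodule F (ι → F)) : dualCode (dualCode C) = C := by
  classical
  rw [dualCode_eq_orthogonal, dualCode_eq_orthogonal]
  exact LinearMap.BilinForm.orthogonal_orthogonal dotForm_nondeg dotForm_refl C
section Helpers

variable {F : Type*} [Field F]

theorem mem_dualCode {ι : Type*} [Fintype ι] {C : Submodule F (ι → F)} {y : ι → F} :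
    y ∈ dualCode C ↔ ∀ x ∈ C, dotProduct x y = 0 := Iff.rfl

theorem mem_dualCode_span {ι : Type*} [Fintype ι] {S : Set (ι → F)} {w : ι → F}
    (h : ∀ s ∈ S, dotProduct s w = 0) :
    w ∈ dualCode (Submodule.span F S) := by
  intro x hx
  induction hx using Submodule.span_induction with
  | mem s hs => exact h s hs
  | zero => simp
  | add a b _ _ ha hb => rw [add_dotProduct, ha, hb, add_zero]
  | smul c a _ ha => rw [smul_dotProduct, ha, smul_zero]

theorem dot_block {n N : ℕ} (u w : Fin N × Fin n → F) :
    dotProduct u w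
      = ∑ i, dotProduct (fun j => u (i, j)) (fun j => w (i, j)) := by
  rw [dotProduct, Fintype.sum_prod_type]; rfl

theorem block_ortho {n N : ℕ} (C : Submodule F (Fin n → F)) (u w : Fin N × Fin n → F)
    (hu : ∀ i, (fun j => u (i, j)) ∈ C) (hw : w ∈ blockCode (dualCode C)) :
    dotProduct u w = 0 := by
  rw [dot_block]
  exact Finset.sum_eq_zero fun i _ => hw i _ (hu i)

theorem dot_sum_smul {n : ℕ} {κ : Type*} [Fintype κ] (v : Fin n → F) (c : κ → F)
    (g : κ → Fin n → F) :
    dotProduct v (∑ a, c a • g a) = ∑ a, c a * dotProduct v (g a) := by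
  simp only [dotProduct, Finset.sum_apply, Pi.smul_apply, smul_eq_mul,
    Finset.mul_sum]
  rw [Finset.sum_comm]
  exact Finset.sum_congr rfl fun a _ => Finset.sum_congr rfl fun j _ => by ring

end Helpers
/-- duality theorem for concatenated CSS code pairs. -/
theorem stmt2 {F K : Type*} [Field F] [Fintype F] [Field K] [Fintype K] [Algebra F K]
    {k n N : ℕ}
    (b1 b2 : Module.Basis (Fin k) F K)
    (hdualb : ∀ i j, Algebra.trace F K (b1 i * b2 j) = if i = j then 1 else 0)
    (g1 g2 : Fin k → Fin n → F)
    (hg : ∀ i j, dotProduct (g1 i) (g2 j) = if i = j then 1 else 0)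
    (C1 C2 : Submodule F (Fin n → F))
    (hCSSin : dualCode C2 ≤ C1)
    (hkin : Module.finrank F C1 + Module.finrank F C2 = n + k)
    (hC1 : C1 = dualCode C2 ⊔ Submodule.span F (Set.range g1))
    (hC2 : C2 = dualCode C1 ⊔ Submodule.span F (Set.range g2))
    (D1 D2 : Submodule K (Fin N → K))
    (hD : dualCode D2 ≤ D1)
    (P1 P2 : (Fin N → K) → (Fin N × Fin n → F))
    (hP1 : ∀ x q, P1 x q = ∑ j, b1.repr (x q.1) j • g1 j q.2)
    (hP2 : ∀ x q, P2 x q = ∑ j, b2.repr (x q.1) j • g2 j q.2) :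
    dualCode (Submodule.span F (P1 '' (dualCode D2 : Set (Fin N → K)))
        ⊔ blockCode (dualCode C2))
      = Submodule.span F (P2 '' (D2 : Set (Fin N → K))) ⊔ blockCode (dualCode C1) := by
  classical
  -- trace pairing with dual bases
  have key : ∀ (a : Fin k) (v : K), Algebra.trace F K (b1 a * v) = b2.repr v a := by
    intro a v
    conv_lhs => rw [← b2.sum_repr v]
    rw [Finset.mul_sum, map_sum]
    simp only [mul_smul_comm, map_smul, hdualb, smul_eq_mul, mul_ite, mul_one, mul_zero]
    simp [Finset.sum_ite_eq]
  have htr : ∀ u v : K, Algebra.trace F K (u * v) = ∑ a, b1.repr u a * b2.repr v a := by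
    intro u v
    conv_lhs => rw [← b1.sum_repr u]
    rw [Finset.sum_mul, map_sum]
    exact Finset.sum_congr rfl fun a _ => by
      rw [smul_mul_assoc, map_smul, key, smul_eq_mul]
  have hnd : ∀ t : K, (∀ c : K, Algebra.trace F K (c * t) = 0) → t = 0 := by
    intro t ht
    have h0 : ∀ a, b2.repr t a = 0 := fun a => (key a t).symm.trans (ht (b1 a))
    calc t = ∑ a, b2.repr t a • b2 a := (b2.sum_repr t).symm
    _ = 0 := by simp [h0]
  -- generator membership
  have hg1C1 : ∀ a, g1 a ∈ C1 := fun a =>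
    hC1 ▸ Submodule.mem_sup_right (Submodule.subset_span (Set.mem_range_self a))
  have hg2C2 : ∀ a, g2 a ∈ C2 := fun a =>
    hC2 ▸ Submodule.mem_sup_right (Submodule.subset_span (Set.mem_range_self a))
  -- rows of P1, P2
  have hrowP1 : ∀ x i, (fun j => P1 x (i, j)) = ∑ a, b1.repr (x i) a • g1 a := by
    intro x i; funext j; rw [hP1]; simp [Finset.sum_apply]
  have hrowP2 : ∀ y i, (fun j => P2 y (i, j)) = ∑ a, b2.repr (y i) a • g2 a := by
    intro y i; funext j; rw [hP2]; simp [Finset.sum_apply]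
  have hrowP1C1 : ∀ x i, (fun j => P1 x (i, j)) ∈ C1 := fun x i => by
    rw [hrowP1]
    exact Submodule.sum_mem _ fun a _ => Submodule.smul_mem _ _ (hg1C1 a)
  have hrowP2C2 : ∀ y i, (fun j => P2 y (i, j)) ∈ C2 := fun y i => by
    rw [hrowP2]
    exact Submodule.sum_mem _ fun a _ => Submodule.smul_mem _ _ (hg2C2 a)
  -- pairing formula
  have hpair : ∀ (x : Fin N → K) (v : Fin N × Fin n → F),
      dotProduct (P1 x) v = ∑ i, ∑ a, b1.repr (x i) a *
        dotProduct (g1 a) (fun j => v (i, j)) := by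
    intro x v
    rw [dot_block]
    refine Finset.sum_congr rfl fun i _ => ?_
    rw [hrowP1, dotProduct_comm, dot_sum_smul]
    exact Finset.sum_congr rfl fun a _ => by rw [dotProduct_comm]
  have hg1P2 : ∀ y i a, dotProduct (g1 a) (fun j => P2 y (i, j))
      = b2.repr (y i) a := by
    intro y i a
    rw [hrowP2, dot_sum_smul]
    simp [hg, Finset.sum_ite_eq]
  have hP1P2 : ∀ x y, dotProduct (P1 x) (P2 y)
      = Algebra.trace F K (dotProduct x y) := by
    intro x y
    rw [hpair, dotProduct, map_sum]
    refine Finset.sum_congr rfl fun i _ => ?_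
    rw [htr]
    exact Finset.sum_congr rfl fun a _ => by rw [hg1P2]
  apply le_antisymm
  · -- hard direction
    intro v hv
    have hv1 : ∀ x ∈ dualCode D2, dotProduct (P1 x) v = 0 := fun x hx =>
      hv _ (Submodule.mem_sup_left (Submodule.subset_span ⟨x, hx, rfl⟩))
    have hv2 : ∀ w ∈ blockCode (dualCode C2), dotProduct w v = 0 := fun w hw =>
      hv w (Submodule.mem_sup_right hw)
    -- each row of v lies in C2
    have hrowv : ∀ i, (fun j => v (i, j)) ∈ C2 := by
      intro i
      rw [← dualCode_dualCode C2]
      intro d hd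
      have hmem : (fun q : Fin N × Fin n => if q.1 = i then d q.2 else 0)
          ∈ blockCode (dualCode C2) := by
        intro i'
        by_cases h : i' = i
        · subst h; simpa using hd
        · show (fun j : Fin n => if i' = i then d j else 0) ∈ dualCode C2
          simp only [if_neg h]
          exact (dualCode C2).zero_mem
      have h0 := hv2 _ hmem
      rw [dot_block] at h0
      rw [Finset.sum_eq_single i (fun i' _ hne => by
            simp [dotProduct, hne]) (fun h => absurd (Finset.mem_univ i) h)] at h0
      simpa using h0
    -- the decoded K-vector
    set y : Fin N → K :=
      fun i => ∑ a, (dotProduct (g1 a) (fun j => v (i, j))) • b2 a with hy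
    have hrepry : ∀ i a, b2.repr (y i) a
        = dotProduct (g1 a) (fun j => v (i, j)) := by
      intro i a
      have hyi : y i = ∑ a, (dotProduct (g1 a) fun j => v (i, j)) • b2 a := rfl
      rw [hyi, b2.repr_sum_self]
    have hyD2 : y ∈ D2 := by
      rw [← dualCode_dualCode D2]
      intro x hx
      refine hnd _ fun c => ?_
      have h0 := hv1 _ (Submodule.smul_mem _ c hx)
      have heq : dotProduct (P1 (c • x)) v
          = Algebra.trace F K (dotProduct (c • x) y) := by
        rw [hpair, dotProduct, map_sum]
        refine Finset.sum_congr rfl fun i _ => ?_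
        rw [htr]
        exact Finset.sum_congr rfl fun a _ => by rw [hrepry]
      rw [heq, smul_dotProduct, smul_eq_mul] at h0
      exact h0
    have hdiff : v - P2 y ∈ blockCode (dualCode C1) := by
      intro i
      have hvi := hrowv i
      rw [hC2] at hvi
      obtain ⟨d, hd, s, hs, hds⟩ := Submodule.mem_sup.mp hvi
      obtain ⟨c, hc⟩ := (Submodule.mem_span_range_iff_exists_fun F).mp hs
      have hdot : ∀ a, dotProduct (g1 a) (fun j => v (i, j)) = c a := by
        intro a
        rw [← hds, dotProduct_add, hd (g1 a) (hg1C1 a), zero_add, ← hc,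
          dot_sum_smul]
        simp [hg, Finset.sum_ite_eq]
      have h1 : (fun j => P2 y (i, j)) = s := by
        rw [hrowP2, ← hc]
        exact Finset.sum_congr rfl fun a _ => by rw [hrepry, hdot]
      have hrow : (fun j => (v - P2 y) (i, j)) = d := by
        funext j
        have h2 := congrFun h1 j
        have h3 := congrFun hds j
        simp only [Pi.add_apply] at h3
        simp only [Pi.sub_apply]
        rw [h2, ← h3]
        ring
      show (fun j => (v - P2 y) (i, j)) ∈ dualCode C1
      rw [hrow]
      exact hd
    have hfin : v = P2 y + (v - P2 y) := by abel
    rw [hfin]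
    exact Submodule.add_mem _
      (Submodule.mem_sup_left (Submodule.subset_span ⟨y, hyD2, rfl⟩))
      (Submodule.mem_sup_right hdiff)
  · -- easy direction
    refine sup_le ?_ ?_
    · rw [Submodule.span_le]
      rintro _ ⟨yy, hyy, rfl⟩
      intro x hx
      rcases Submodule.mem_sup.mp hx with ⟨a, ha, b, hb, rfl⟩
      rw [add_dotProduct]
      have h1 : dotProduct a (P2 yy) = 0 := by
        refine mem_dualCode_span ?_ a ha
        rintro _ ⟨x', hx', rfl⟩
        rw [hP1P2]
        have hz : dotProduct x' yy = 0 := by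
          rw [dotProduct_comm]; exact hx' yy hyy
        rw [hz, map_zero]
      have h2 : dotProduct b (P2 yy) = 0 := by
        rw [dotProduct_comm]
        exact block_ortho C2 (P2 yy) b (hrowP2C2 yy) hb
      rw [h1, h2, add_zero]
    · intro w hw x hx
      rcases Submodule.mem_sup.mp hx with ⟨a, ha, b, hb, rfl⟩
      rw [add_dotProduct]
      have h1 : dotProduct a w = 0 := by
        refine mem_dualCode_span ?_ a ha
        rintro _ ⟨x', hx', rfl⟩
        exact block_ortho C1 (P1 x') w (hrowP1C1 x') hw
      have h2 : dotProduct b w = 0 :=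
        block_ortho C1 b w (fun i => hCSSin (hb i)) hw
      rw [h1, h2, add_zero]
end

section
/- Let (C1,C2) be an [[n,k]] code pair over F_q and (D1,D2) an [[N,K]] code pair over F_{q^k}. Then the concatenated pair (L1, L2) with L1 = π_1(D1) + ⊕_{i=1}^N C2^⊥ and L2 = π_2(D2) + ⊕_{i=1}^N C1^⊥ is an [[nN, kK]] code pair over F_q; that is, L2^⊥ ≤ L1 and dim L1 + dim L2 − nN = kK. -/
open Matrix Module Submodule

section Aux
variable {F : Type*} [Field F]

noncomputable def dotMap (n : ℕ) : (Fin n → F) →ₗ[F] Module.Dual F (Fin n → F) where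
  toFun y :=
    { toFun := fun x => x ⬝ᵥ y
      map_add' := fun a b => add_dotProduct a b y
      map_smul' := fun c a => smul_dotProduct c a y }
  map_add' a b := LinearMap.ext fun x => dotProduct_add x a b
  map_smul' c a := LinearMap.ext fun x => dotProduct_smul c x a

lemma dotMap_injective (n : ℕ) : Function.Injective (dotMap (F := F) n) := by
  intro y z h
  funext i
  have := congrArg (fun f => f (Pi.single i 1)) h
  simpa [dotMap, single_dotProduct] using this

noncomputable def dotEquiv (n : ℕ) : (Fin n → F) ≃ₗ[F] Module.Dual F (Fin n → F) :=
  (dotMap n).linearEquivOfInjective (dotMap_injective n) (by rw [Subspace.dual_finrank_eq])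

lemma dotEquiv_apply {n : ℕ} (y x : Fin n → F) : dotEquiv n y x = x ⬝ᵥ y := rfl

lemma finrank_dualCode {n : ℕ} (C : Submodule F (Fin n → F)) :
    finrank F (dualCode C) + finrank F C = n := by
  have hC : dualCode C = C.dualAnnihilator.comap (dotEquiv (F := F) n).toLinearMap := by
    ext y
    simp only [Submodule.mem_comap, Submodule.mem_dualAnnihilator, LinearEquiv.coe_coe,
      dotEquiv_apply]
    exact Iff.rfl
  have h1 : finrank F (dualCode C) = finrank F C.dualAnnihilator := by
    rw [hC]
    have e : (C.dualAnnihilator.comap (dotEquiv (F := F) n).toLinearMap) ≃ₗ[F] C.dualAnnihilator :=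
      LinearEquiv.ofSubmodule' (dotEquiv (F := F) n) C.dualAnnihilator
    exact LinearEquiv.finrank_eq (R := F) e
  have h2 : finrank F ((Fin n → F) ⧸ C) = finrank F C.dualAnnihilator :=
    LinearEquiv.finrank_eq (R := F) (Subspace.quotEquivAnnihilator C)
  have h3 := Submodule.finrank_quotient_add_finrank C
  have h4 : finrank F (Fin n → F) = n := by simp
  omega

lemma dualCode_dualCode_s11 {n : ℕ} (C : Submodule F (Fin n → F)) :
    dualCode (dualCode C) = C := by
  have hle : C ≤ dualCode (dualCode C) := fun x hx y hy => by
    rw [dotProduct_comm]; exact hy x hx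
  have h1 := finrank_dualCode C
  have h2 := finrank_dualCode (dualCode C)
  exact (Submodule.eq_of_le_of_finrank_le hle (by omega)).symm

def blockEquiv {n N : ℕ} (C : Submodule F (Fin n → F)) :
    blockCode (N := N) C ≃ₗ[F] (Fin N → C) where
  toFun v i := ⟨fun j => v.1 (i, j), v.2 i⟩
  map_add' v w := rfl
  map_smul' c v := rfl
  invFun f := ⟨fun q => (f q.1).1 q.2, fun i => (f i).2⟩
  left_inv v := rfl
  right_inv f := rfl

lemma finrank_blockCode {n N : ℕ} (C : Submodule F (Fin n → F)) :
    finrank F (blockCode (N := N) C) = N * finrank F C := by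
  rw [LinearEquiv.finrank_eq (blockEquiv C)]
  simp [Module.finrank_pi_fintype, Finset.sum_const, mul_comm]

lemma single_block_mem {n N : ℕ} {C : Submodule F (Fin n → F)} {c : Fin n → F}
    (hc : c ∈ C) (i : Fin N) :
    (fun q : Fin N × Fin n => if q.1 = i then c q.2 else 0) ∈ blockCode (N := N) C := by
  intro i'
  by_cases h : i' = i
  · simpa [h] using hc
  · have : (fun j : Fin n => if i' = i then c j else 0) = 0 := by funext j; simp [h]
    rw [this]; exact C.zero_mem

lemma single_block_dot {n N : ℕ} (c : Fin n → F) (i : Fin N) (v : Fin N × Fin n → F) :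
    (fun q : Fin N × Fin n => if q.1 = i then c q.2 else 0) ⬝ᵥ v
      = c ⬝ᵥ (fun j => v (i, j)) := by
  rw [dotProduct, dotProduct, Fintype.sum_prod_type]
  rw [Finset.sum_eq_single i]
  · simp
  · intro b _ hb; simp [hb]
  · intro h; exact absurd (Finset.mem_univ i) h

lemma blocks_dot {n N : ℕ} (u v : Fin N × Fin n → F) :
    u ⬝ᵥ v = ∑ i, (fun j => u (i, j)) ⬝ᵥ (fun j => v (i, j)) := by
  rw [dotProduct, Fintype.sum_prod_type]; rfl

lemma dual_blockCode_le {n N : ℕ} (C : Submodule F (Fin n → F)) :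
    dualCode (blockCode (N := N) C) ≤ blockCode (dualCode C) := by
  intro v hv i c hc
  have h1 := hv _ (single_block_mem hc i)
  rwa [single_block_dot] at h1

lemma span_dot {n k : ℕ} {g1 g2 : Fin k → Fin n → F}
    (hg : ∀ i j, g1 i ⬝ᵥ g2 j = if i = j then 1 else 0) (r s : Fin k → F) :
    (fun j => ∑ a, r a • g1 a j) ⬝ᵥ (fun j => ∑ b, s b • g2 b j) = ∑ a, r a * s a := by
  rw [dotProduct]
  simp only [smul_eq_mul, Finset.sum_mul_sum]
  rw [Finset.sum_comm]
  refine Finset.sum_congr rfl fun a _ => ?_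
  rw [Finset.sum_comm]
  have h : ∀ b, (∑ j, (r a * g1 a j) * (s b * g2 b j)) = r a * s b * (g1 a ⬝ᵥ g2 b) := by
    intro b; rw [dotProduct, Finset.mul_sum]; exact Finset.sum_congr rfl fun j _ => by ring
  simp only [h, hg, mul_ite, mul_one, mul_zero]
  simp

lemma dot_span {n k : ℕ} {g g' : Fin k → Fin n → F}
    (hg : ∀ i j, g i ⬝ᵥ g' j = if i = j then 1 else 0) (r : Fin k → F) (jj : Fin k) :
    g' jj ⬝ᵥ (fun j => ∑ a, r a • g a j) = r jj := by
  rw [dotProduct_comm, dotProduct]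
  simp only [smul_eq_mul, Finset.sum_mul]
  rw [Finset.sum_comm]
  have h : ∀ a, (∑ j, r a * g a j * g' jj j) = r a * (g a ⬝ᵥ g' jj) := by
    intro a; rw [dotProduct, Finset.mul_sum]; exact Finset.sum_congr rfl fun j _ => by ring
  simp only [h, hg, mul_ite, mul_one, mul_zero]
  simp

end Aux

section Aux2
variable {F : Type*} [Field F] {K : Type*} [Field K] [Algebra F K]

lemma trace_repr {k : ℕ} (b1 b2 : Basis (Fin k) F K)
    (hdualb : ∀ i j, Algebra.trace F K (b1 i * b2 j) = if i = j then 1 else 0)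
    (u v : K) :
    Algebra.trace F K (u * v) = ∑ a, b1.repr u a * b2.repr v a := by
  conv_lhs => rw [← Basis.sum_repr b1 u, ← Basis.sum_repr b2 v]
  rw [Finset.sum_mul_sum, map_sum]
  simp only [map_sum, smul_mul_smul_comm, _root_.map_smul, smul_eq_mul]
  simp only [hdualb, mul_ite, mul_one, mul_zero]
  simp

lemma trace_ndg {k : ℕ} (b1 b2 : Basis (Fin k) F K)
    (hdualb : ∀ i j, Algebra.trace F K (b1 i * b2 j) = if i = j then 1 else 0)
    {z : K} (hz : ∀ c : K, Algebra.trace F K (c * z) = 0) : z = 0 := by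
  have h : ∀ j, b2.repr z j = 0 := by
    intro j
    have h1 := trace_repr b1 b2 hdualb (b1 j) z
    rw [hz (b1 j)] at h1
    have h2 : ∑ a, b1.repr (b1 j) a * b2.repr z a = b2.repr z j := by
      simp [Basis.repr_self, Finsupp.single_apply, ite_mul, one_mul, zero_mul,
        Finset.sum_ite_eq]
    rw [h2] at h1
    exact h1.symm
  exact b2.repr.map_eq_zero_iff.mp (Finsupp.ext h)

noncomputable def concMap {k n N : ℕ} (b : Basis (Fin k) F K) (g : Fin k → Fin n → F) :
    (Fin N → K) →ₗ[F] (Fin N × Fin n → F) where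
  toFun x q := ∑ a, b.repr (x q.1) a • g a q.2
  map_add' x y := by
    funext q
    simp [Pi.add_apply, map_add, add_smul, add_mul, Finset.sum_add_distrib]
  map_smul' c x := by
    funext q
    simp [Pi.smul_apply, _root_.map_smul, Finset.smul_sum, mul_smul, Finset.mul_sum,
      mul_assoc]

lemma concMap_eq_zero {k n N : ℕ} (b : Basis (Fin k) F K) {g g' : Fin k → Fin n → F}
    (hg : ∀ i j, g i ⬝ᵥ g' j = if i = j then 1 else 0)
    {C : Submodule F (Fin n → F)} (hg' : ∀ j, g' j ∈ C)
    {x : Fin N → K} (hx : concMap (N := N) b g x ∈ blockCode (dualCode C)) :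
    x = 0 := by
  funext i
  have hblock := hx i
  have h : ∀ jj, b.repr (x i) jj = 0 := by
    intro jj
    have h0 := hblock (g' jj) (hg' jj)
    rwa [show (fun j => concMap (N := N) b g x (i, j))
        = (fun j => ∑ a, b.repr (x i) a • g a j) from rfl, dot_span hg] at h0
  exact b.repr.map_eq_zero_iff.mp (Finsupp.ext h)

lemma concMap_injective {k n N : ℕ} (b : Basis (Fin k) F K) {g g' : Fin k → Fin n → F}
    (hg : ∀ i j, g i ⬝ᵥ g' j = if i = j then 1 else 0)
    {C : Submodule F (Fin n → F)} (hg' : ∀ j, g' j ∈ C) :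
    Function.Injective (concMap (F := F) (K := K) (k := k) (n := n) (N := N) b g) := by
  refine (injective_iff_map_eq_zero _).mpr fun x hx => ?_
  exact concMap_eq_zero b hg hg' (C := C) (by rw [hx]; exact Submodule.zero_mem _)

lemma finrank_conc {k n N : ℕ} (b : Basis (Fin k) F K) {g g' : Fin k → Fin n → F}
    (hg : ∀ i j, g i ⬝ᵥ g' j = if i = j then 1 else 0)
    {C : Submodule F (Fin n → F)} (hg' : ∀ j, g' j ∈ C)
    (D : Submodule K (Fin N → K)) :
    finrank F ((Submodule.span F ((concMap (N := N) b g) '' (D : Set (Fin N → K)))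
        ⊔ blockCode (dualCode C) : Submodule F (Fin N × Fin n → F)))
      = k * finrank K D + N * finrank F (dualCode C) := by
  have hFD : FiniteDimensional F K := Module.Finite.of_basis b
  have hspan : Submodule.span F ((concMap (N := N) b g) '' (D : Set (Fin N → K)))
      = Submodule.map (concMap (N := N) b g) (D.restrictScalars F) := by
    rw [← Submodule.span_eq (D.restrictScalars F), Submodule.span_image]
    rfl
  have hdisj : Submodule.span F ((concMap (N := N) b g) '' (D : Set (Fin N → K)))
      ⊓ blockCode (dualCode C) = ⊥ := by
    rw [hspan, eq_bot_iff]
    rintro u ⟨hu1, hu2⟩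
    obtain ⟨x, hx, rfl⟩ := hu1
    have hx0 : x = 0 := concMap_eq_zero b hg hg' hu2
    rw [hx0, map_zero]
    exact Submodule.zero_mem ⊥
  have h1 : finrank F (Submodule.map (concMap (N := N) b g) (D.restrictScalars F))
      = k * finrank K D := by
    rw [← LinearEquiv.finrank_eq (R := F)
      (Submodule.equivMapOfInjective _ (concMap_injective b hg hg') (D.restrictScalars F))]
    rw [LinearEquiv.finrank_eq (R := F)
      ((Submodule.restrictScalarsEquiv F K _ D).restrictScalars F)]
    rw [← Module.finrank_mul_finrank F K D]
    congr 1
    rw [Module.finrank_eq_card_basis b, Fintype.card_fin]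
  have h2 : finrank F (blockCode (N := N) (dualCode C)) = N * finrank F (dualCode C) :=
    finrank_blockCode _
  have h3 := Submodule.finrank_sup_add_finrank_inf_eq
    (Submodule.span F ((concMap (N := N) b g) '' (D : Set (Fin N → K))))
    (blockCode (dualCode C))
  rw [hdisj, finrank_bot, add_zero] at h3
  rw [h3, hspan, h1, h2]

end Aux2

/-- the concatenation of an `[[n,k]]` code pair and an `[[N,K]]`
code pair is an `[[nN,kK]]` code pair. -/
theorem stmt11 {F K : Type*} [Field F] [Fintype F] [Field K] [Fintype K] [Algebra F K]
    {k n N Kd : ℕ}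
    (b1 b2 : Module.Basis (Fin k) F K)
    (hdualb : ∀ i j, Algebra.trace F K (b1 i * b2 j) = if i = j then 1 else 0)
    (g1 g2 : Fin k → Fin n → F)
    (hg : ∀ i j, dotProduct (g1 i) (g2 j) = if i = j then 1 else 0)
    (C1 C2 : Submodule F (Fin n → F))
    (hCSSin : dualCode C2 ≤ C1)
    (hkin : Module.finrank F C1 + Module.finrank F C2 = n + k)
    (hC1 : C1 = dualCode C2 ⊔ Submodule.span F (Set.range g1))
    (hC2 : C2 = dualCode C1 ⊔ Submodule.span F (Set.range g2))
    (D1 D2 : Submodule K (Fin N → K))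
    (hD : dualCode D2 ≤ D1)
    (hKd : Module.finrank K D1 + Module.finrank K D2 = N + Kd)
    (P1 P2 : (Fin N → K) → (Fin N × Fin n → F))
    (hP1 : ∀ x q, P1 x q = ∑ j, b1.repr (x q.1) j • g1 j q.2)
    (hP2 : ∀ x q, P2 x q = ∑ j, b2.repr (x q.1) j • g2 j q.2)
    (L1 L2 : Submodule F (Fin N × Fin n → F))
    (hL1 : L1 = Submodule.span F (P1 '' (D1 : Set (Fin N → K)))
        ⊔ blockCode (dualCode C2))
    (hL2 : L2 = Submodule.span F (P2 '' (D2 : Set (Fin N → K)))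
        ⊔ blockCode (dualCode C1)) :
    dualCode L2 ≤ L1 ∧
    Module.finrank F L1 + Module.finrank F L2 = n * N + k * Kd := by
  classical
  have hP1' : P1 = ⇑(concMap (N := N) b1 g1) := by
    funext x; funext q; rw [hP1]; rfl
  have hP2' : P2 = ⇑(concMap (N := N) b2 g2) := by
    funext x; funext q; rw [hP2]; rfl
  have hg' : ∀ i j, g2 i ⬝ᵥ g1 j = if i = j then 1 else 0 := by
    intro i j
    rw [dotProduct_comm, hg j i]
    exact if_congr eq_comm rfl rfl
  have hg2C2 : ∀ j, g2 j ∈ C2 := fun j =>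
    hC2 ▸ Submodule.mem_sup_right (Submodule.subset_span ⟨j, rfl⟩)
  have hg1C1 : ∀ j, g1 j ∈ C1 := fun j =>
    hC1 ▸ Submodule.mem_sup_right (Submodule.subset_span ⟨j, rfl⟩)
  constructor
  · -- the inclusion dualCode L2 ≤ L1
    intro v hv
    -- each block of v lies in C1
    have hblocks : ∀ i, (fun j => v (i, j)) ∈ C1 := by
      intro i
      have h1 : (fun j => v (i, j)) ∈ dualCode (dualCode C1) := by
        intro c hc
        have h0 := hv _ (hL2 ▸ Submodule.mem_sup_right (single_block_mem hc i))
        rwa [single_block_dot] at h0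
      rwa [dualCode_dualCode_s11] at h1
    -- decompose each block
    have hdecomp : ∀ i, ∃ w ∈ dualCode C2, ∃ r : Fin k → F,
        ∀ j, v (i, j) = w j + ∑ a, r a • g1 a j := by
      intro i
      have hm := hblocks i
      rw [hC1] at hm
      obtain ⟨w, hw, z, hz, hwz⟩ := Submodule.mem_sup.mp hm
      obtain ⟨r, hr⟩ := (mem_span_range_iff_exists_fun F).mp hz
      refine ⟨w, hw, r, fun j => ?_⟩
      have h1 : v (i, j) = w j + z j := (congrFun hwz j).symm
      have h2 : z j = ∑ a, r a • g1 a j := by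
        rw [← hr]; simp
      rw [h1, h2]
    choose w hw r hvr using hdecomp
    set x : Fin N → K := fun i => ∑ a, r i a • b1 a with hxdef
    have hrepr : ∀ i a, b1.repr (x i) a = r i a := by
      intro i a
      exact congrFun (b1.repr_sum_self (r i)) a
    have hconc1 : ∀ i, (fun j => concMap (N := N) b1 g1 x (i, j))
        = fun j => ∑ a, r i a • g1 a j := by
      intro i
      funext j
      show ∑ a, b1.repr (x i) a • g1 a j = _
      simp [hrepr]
    -- x is in the dual of D2, hence in D1
    have hxD : x ∈ dualCode D2 := by
      intro y hy
      have htr : ∀ y' ∈ D2, Algebra.trace F K (x ⬝ᵥ y') = 0 := by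
        intro y' hy'
        have hPy : concMap (N := N) b2 g2 y' ∈ L2 := by
          rw [hL2]
          exact Submodule.mem_sup_left (Submodule.subset_span ⟨y', hy', (congrFun hP2' y').symm ▸ rfl⟩)
        have h0 := hv _ hPy
        rw [blocks_dot] at h0
        -- compute each block dot product
        have hib : ∀ i, (fun j => concMap (N := N) b2 g2 y' (i, j)) ⬝ᵥ (fun j => v (i, j))
            = ∑ a, b1.repr (x i) a * b2.repr (y' i) a := by
          intro i
          have hsplit : (fun j => v (i, j))
              = w i + fun j => ∑ a, r i a • g1 a j := by
            funext j; rw [hvr i j]; rfl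
          rw [hsplit, dotProduct_add]
          have hsy : (fun j => concMap (N := N) b2 g2 y' (i, j)) ∈ C2 := by
            have : (fun j => concMap (N := N) b2 g2 y' (i, j))
                = ∑ a, b2.repr (y' i) a • g2 a := by
              funext j; simp [concMap]
            rw [this]
            exact Submodule.sum_mem _ fun a _ => Submodule.smul_mem _ _ (hg2C2 a)
          have hz1 : (fun j => concMap (N := N) b2 g2 y' (i, j)) ⬝ᵥ w i = 0 := hw i _ hsy
          have hz2 : (fun j => concMap (N := N) b2 g2 y' (i, j)) ⬝ᵥ
              (fun j => ∑ a, r i a • g1 a j) = ∑ a, r i a * b2.repr (y' i) a := by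
            rw [dotProduct_comm]
            exact span_dot hg (r i) (fun a => b2.repr (y' i) a)
          rw [hz1, hz2, zero_add]
          exact Finset.sum_congr rfl fun a _ => by rw [hrepr]
        rw [Finset.sum_congr rfl fun i _ => hib i] at h0
        have htr2 : Algebra.trace F K (x ⬝ᵥ y') = ∑ i, ∑ a, b1.repr (x i) a * b2.repr (y' i) a := by
          rw [dotProduct, map_sum]
          exact Finset.sum_congr rfl fun i _ => trace_repr b1 b2 hdualb (x i) (y' i)
        rw [htr2, h0]
      have hall : ∀ c : K, Algebra.trace F K (c * (x ⬝ᵥ y)) = 0 := by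
        intro c
        have h := htr (c • y) (D2.smul_mem c hy)
        rwa [dotProduct_smul, smul_eq_mul] at h
      rw [dotProduct_comm]
      exact trace_ndg b1 b2 hdualb hall
    have hxD1 : x ∈ D1 := hD hxD
    -- reassemble v
    have hv1 : v = concMap (N := N) b1 g1 x + (fun q => w q.1 q.2) := by
      funext q
      have h1 := hvr q.1 q.2
      have h2 := congrFun (hconc1 q.1) q.2
      show v (q.1, q.2) = concMap (N := N) b1 g1 x (q.1, q.2) + w q.1 q.2
      rw [h1]
      rw [show concMap (N := N) b1 g1 x (q.1, q.2)
          = (fun j => concMap (N := N) b1 g1 x (q.1, j)) q.2 from rfl, hconc1 q.1]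
      ring
    rw [hL1, hv1]
    refine Submodule.add_mem _ (Submodule.mem_sup_left (Submodule.subset_span
      ⟨x, hxD1, by rw [hP1']⟩)) (Submodule.mem_sup_right fun i => ?_)
    exact hw i
  · -- the dimension count
    rw [hL1, hL2, hP1', hP2']
    rw [finrank_conc b1 hg hg2C2 D1, finrank_conc b2 hg' hg1C1 D2]
    have h1 := finrank_dualCode C1
    have h2 := finrank_dualCode C2
    have h5 : Module.finrank F (dualCode C1) + Module.finrank F (dualCode C2) + k = n := by
      omega
    have key : k * Module.finrank K D1 + N * Module.finrank F (dualCode C2)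
        + (k * Module.finrank K D2 + N * Module.finrank F (dualCode C1)) + N * k
        = n * N + k * Kd + N * k := by
      have e1 : k * Module.finrank K D1 + N * Module.finrank F (dualCode C2)
          + (k * Module.finrank K D2 + N * Module.finrank F (dualCode C1)) + N * k
          = k * (Module.finrank K D1 + Module.finrank K D2)
            + N * (Module.finrank F (dualCode C1) + Module.finrank F (dualCode C2) + k) := by
        ring
      rw [e1, hKd, h5]
      ring
    exact Nat.add_right_cancel key
end
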